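/- arXiv:1711.05461 — 4 statements merged into one kernel-verified Lean document; each statement's English description precedes it below -/
import Mathlib

section
/- Let g: T → ℝ be the function on the circle T = ℝ/ℤ defined by g(u) = u for u ∈ (-1/2, 1/2) and g(±1/2) = 0, and let f be a C¹ probability density on T. For 0 ≤ ε < 1 define Φ_f(x) = x + ε ∫_T g(y-x) f(y) dy. Then Φ_f is differentiable with Φ_f'(x) = 1 + ε(f(x+1/2) - 1) for all x ∈ T. -/
open MeasureTheory Function Set

/-- The sawtooth interaction function `g` on the circle, lifted 1-periodically to `ℝ`:
`g(u) = u` for `u ∈ (-1/2, 1/2)` and `g(±1/2) = 0`. -/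
noncomputable def saw (u : ℝ) : ℝ :=
  if Int.fract (u + 1/2) = 0 then 0 else u - (round u : ℤ)

/-- The lift of the diffusive coupling map `Φ_f(x) = x + ε ∫ g(y-x) f(y) dy`. -/
noncomputable def Phi (ε : ℝ) (f : ℝ → ℝ) (x : ℝ) : ℝ :=
  x + ε * ∫ y in (0:ℝ)..1, saw (y - x) * f y

/-- Property (F): `f` is a C¹ probability density on the circle (1-periodic on `ℝ`). -/
def PropF (f : ℝ → ℝ) : Prop :=
  ContDiff ℝ 1 f ∧ Function.Periodic f 1 ∧ (∀ x, 0 ≤ f x) ∧ (∫ x in (0:ℝ)..1, f x) = 1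

/-- `f'` is Lipschitz. -/
def LipDeriv (f : ℝ → ℝ) : Prop := ∃ L : ℝ, ∀ x y, |deriv f x - deriv f y| ≤ L * |x - y|

/-- Total variation over one period, for C¹ functions. -/
noncomputable def tvar (f : ℝ → ℝ) : ℝ := ∫ x in (0:ℝ)..1, |deriv f x|

/-- L¹ norm over one period. -/
noncomputable def l1 (f : ℝ → ℝ) : ℝ := ∫ x in (0:ℝ)..1, |f x|

/-- BV norm for C¹ functions. -/
noncomputable def bv (f : ℝ → ℝ) : ℝ := l1 f + tvar f

/-- Transfer (Perron–Frobenius) operator of an `N`-fold covering map given by its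
(bijective, strictly monotone) lift `F : ℝ → ℝ`. -/
noncomputable def transfer (F : ℝ → ℝ) (N : ℕ) (u : ℝ → ℝ) (y : ℝ) : ℝ :=
  ∑ k ∈ Finset.range N,
    u (Function.invFun F (y + k)) / |deriv F (Function.invFun F (y + k))|

/-- Property (T): `T` is (the lift of) a C² `N`-fold covering expanding circle map with
`min |T'| = ω > 1`, `T''` Lipschitz, `N < ω²`. -/
def PropT (T : ℝ → ℝ) (N : ℕ) (ω : ℝ) : Prop :=
  ContDiff ℝ 2 T ∧
  ((∀ x, T (x + 1) = T x + N) ∨ (∀ x, T (x + 1) = T x - N)) ∧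
  (∀ x, ω ≤ |deriv T x|) ∧ 1 < ω ∧
  (∃ L : ℝ, ∀ x y, |deriv (deriv T) x - deriv (deriv T) y| ≤ L * |x - y|) ∧
  (N : ℝ) < ω ^ 2

/-- The self-consistent transfer operator `F_ε(f) = P_{T ∘ Φ_f} f`. -/
noncomputable def Feps (T : ℝ → ℝ) (N : ℕ) (ε : ℝ) (f : ℝ → ℝ) : ℝ → ℝ :=
  transfer (T ∘ Phi ε f) N f

/-- The class `C_{R,S}^c` of densities. -/
def CRSc (R S c : ℝ) : Set (ℝ → ℝ) :=
  {f | PropF f ∧ tvar f ≤ R ∧ (∀ x, |deriv f x| ≤ S) ∧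
    ∀ x y, |deriv f x - deriv f y| ≤ c * |x - y|}

/-- Property (F'): `f` satisfies (F), has Lipschitz derivative, and its support avoids
(an interval of length `1/2` on the circle, i.e.) all integer translates of some `[a, a+1/2]`. -/
def PropF' (f : ℝ → ℝ) : Prop :=
  PropF f ∧ LipDeriv f ∧
    ∃ a : ℝ, ∀ x, f x ≠ 0 → ∀ k : ℤ, x + (k : ℝ) ∉ Set.Icc a (a + 1/2)

/-- The length of the minimal closed arc of the circle containing the support of `f`. -/
noncomputable def suppLen (f : ℝ → ℝ) : ℝ :=
  sInf {L | 0 ≤ L ∧ ∃ a : ℝ, ∀ x, f x ≠ 0 → ∃ k : ℤ, x + (k : ℝ) ∈ Set.Icc a (a + L)}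

/-- Wasserstein-1 distance between the measure `f dλ` on the circle and the point mass `δ_y`,
via Kantorovich–Rubinstein duality (1-Lipschitz periodic test functions). -/
noncomputable def W1delta (f : ℝ → ℝ) (y : ℝ) : ℝ :=
  ⨆ ℓ : {ℓ : ℝ → ℝ // LipschitzWith 1 ℓ ∧ Function.Periodic ℓ 1},
    |(∫ x in (0:ℝ)..1, ℓ.1 x * f x) - ℓ.1 y|

/-- BV norm for (not necessarily C¹) functions of bounded variation. -/
noncomputable def bvBV (u : ℝ → ℝ) : ℝ :=
  l1 u + (eVariationOn u (Set.Icc (0:ℝ) 1)).toReal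

lemma saw_periodic : Function.Periodic saw 1 := by
  intro u
  unfold saw
  have h1 : Int.fract (u + 1 + 1/2) = Int.fract (u + 1/2) := by
    rw [show u + 1 + 1/2 = u + 1/2 + 1 by ring, Int.fract_add_one]
  have h2 : round (u + 1) = round u + 1 := by
    simpa using round_add_int u 1
  rw [h1, h2]
  split
  · rfl
  · push_cast; ring

lemma saw_eq {u : ℝ} (h1 : -(1/2) < u) (h2 : u < 1/2) : saw u = u := by
  unfold saw
  have hf : Int.fract (u + 1/2) = u + 1/2 := by
    rw [Int.fract_eq_self]; constructor <;> linarith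
  have hr : round u = 0 := by
    rw [round_eq, Int.floor_eq_zero_iff]
    constructor <;> simp <;> linarith
  have hne : u + 1/2 ≠ 0 := by linarith
  rw [if_neg (by rw [hf]; exact hne), hr]
  simp

/-- the coupling map `Φ_f` is differentiable with
`Φ_f'(x) = 1 + ε (f(x + 1/2) - 1)`. -/
theorem coupling_hasDerivAt (ε : ℝ) (hε0 : 0 ≤ ε) (hε1 : ε < 1)
    (f : ℝ → ℝ) (hf : PropF f) (x : ℝ) :
    HasDerivAt (Phi ε f) (1 + ε * (f (x + 1/2) - 1)) x := by
  obtain ⟨hC1, hper, hpos, hint⟩ := hf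
  have hfc : Continuous f := hC1.continuous
  set A : ℝ → ℝ := fun t => ∫ y in (0:ℝ)..t, y * f y with hA
  set B : ℝ → ℝ := fun t => ∫ y in (0:ℝ)..t, f y with hB
  have hyf : Continuous (fun y : ℝ => y * f y) := continuous_id.mul hfc
  -- key pointwise identity
  have key : ∀ z : ℝ, (∫ y in (0:ℝ)..1, saw (y - z) * f y)
      = A (z + 1/2) - A (z - 1/2) - z * (B (z + 1/2) - B (z - 1/2)) := by
    intro z
    have hperz : Function.Periodic (fun y => saw (y - z) * f y) 1 := by
      intro y
      simp only []
      rw [show y + 1 - z = (y - z) + 1 by ring, saw_periodic (y - z), hper y]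
    have h1 : (∫ y in (0:ℝ)..1, saw (y - z) * f y)
        = ∫ y in (z - 1/2)..(z + 1/2), saw (y - z) * f y := by
      have h := hperz.intervalIntegral_add_eq 0 (z - 1/2)
      rw [zero_add, show z - 1/2 + 1 = z + 1/2 by ring] at h
      exact h
    have h2 : (∫ y in (z - 1/2)..(z + 1/2), saw (y - z) * f y)
        = ∫ y in (z - 1/2)..(z + 1/2), (y - z) * f y := by
      apply intervalIntegral.integral_congr_ae
      have h0 : ∀ᵐ y : ℝ, y ≠ z + 1/2 := by
        refine ae_iff.mpr ?_
        simpa using measure_singleton (z + 1/2)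
      filter_upwards [h0] with y hy hmem
      rw [Set.uIoc_of_le (by linarith : z - 1/2 ≤ z + 1/2)] at hmem
      have h1' : -(1/2) < y - z := by have := hmem.1; linarith
      have h2' : y - z < 1/2 := by
        rcases lt_or_eq_of_le hmem.2 with h | h
        · linarith
        · exact absurd h hy
      rw [saw_eq h1' h2']
    have hi1 : IntervalIntegrable (fun y : ℝ => y * f y) volume (z - 1/2) (z + 1/2) :=
      hyf.intervalIntegrable _ _
    have hi2 : IntervalIntegrable (fun y : ℝ => z * f y) volume (z - 1/2) (z + 1/2) :=
      (continuous_const.mul hfc).intervalIntegrable _ _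
    have h3 : (∫ y in (z - 1/2)..(z + 1/2), (y - z) * f y)
        = (∫ y in (z - 1/2)..(z + 1/2), y * f y) - ∫ y in (z - 1/2)..(z + 1/2), z * f y := by
      rw [← intervalIntegral.integral_sub hi1 hi2]
      congr 1; ext y; ring
    have h4 : (∫ y in (z - 1/2)..(z + 1/2), y * f y) = A (z + 1/2) - A (z - 1/2) := by
      rw [hA]
      exact (intervalIntegral.integral_interval_sub_left
        (hyf.intervalIntegrable _ _) (hyf.intervalIntegrable _ _)).symm
    have h5 : (∫ y in (z - 1/2)..(z + 1/2), z * f y) = z * (B (z + 1/2) - B (z - 1/2)) := by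
      rw [intervalIntegral.integral_const_mul, hB]
      congr 1
      exact (intervalIntegral.integral_interval_sub_left
        (hfc.intervalIntegrable _ _) (hfc.intervalIntegrable _ _)).symm
    rw [h1, h2, h3, h4, h5]
  have hPhi : Phi ε f = fun z => z + ε * (A (z + 1/2) - A (z - 1/2)
      - z * (B (z + 1/2) - B (z - 1/2))) := by
    funext z; rw [Phi, key z]
  rw [hPhi]
  -- derivatives of the pieces
  have hAd : ∀ t : ℝ, HasDerivAt A (t * f t) t := fun t =>
    (hyf.integral_hasStrictDerivAt 0 t).hasDerivAt
  have hBd : ∀ t : ℝ, HasDerivAt B (f t) t := fun t =>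
    (hfc.integral_hasStrictDerivAt 0 t).hasDerivAt
  have hA1 : HasDerivAt (fun z : ℝ => A (z + 1/2)) ((x + 1/2) * f (x + 1/2)) x := by
    simpa [Function.comp_def] using (hAd (x + 1/2)).comp x ((hasDerivAt_id x).add_const (1/2))
  have hA2 : HasDerivAt (fun z : ℝ => A (z - 1/2)) ((x - 1/2) * f (x - 1/2)) x := by
    simpa [Function.comp_def] using (hAd (x - 1/2)).comp x ((hasDerivAt_id x).sub_const (1/2))
  have hB1 : HasDerivAt (fun z : ℝ => B (z + 1/2)) (f (x + 1/2)) x := by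
    simpa [Function.comp_def] using (hBd (x + 1/2)).comp x ((hasDerivAt_id x).add_const (1/2))
  have hB2 : HasDerivAt (fun z : ℝ => B (z - 1/2)) (f (x - 1/2)) x := by
    simpa [Function.comp_def] using (hBd (x - 1/2)).comp x ((hasDerivAt_id x).sub_const (1/2))
  have hBval : B (x + 1/2) - B (x - 1/2) = 1 := by
    have h4 : B (x + 1/2) - B (x - 1/2) = ∫ y in (x - 1/2)..(x + 1/2), f y := by
      rw [hB]
      exact intervalIntegral.integral_interval_sub_left
        (hfc.intervalIntegrable _ _) (hfc.intervalIntegrable _ _)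
    have h5 := hper.intervalIntegral_add_eq (x - 1/2) 0
    rw [h4]
    rw [show x - 1/2 + 1 = x + 1/2 by ring] at h5
    rw [h5]; simpa using hint
  have hfval : f (x - 1/2) = f (x + 1/2) := by
    have := hper (x - 1/2)
    rw [show x - 1/2 + 1 = x + 1/2 by ring] at this
    exact this.symm
  have hmain : HasDerivAt (fun z : ℝ => z + ε * (A (z + 1/2) - A (z - 1/2)
      - z * (B (z + 1/2) - B (z - 1/2))))
      (1 + ε * ((x + 1/2) * f (x + 1/2) - (x - 1/2) * f (x - 1/2)
        - (1 * (B (x + 1/2) - B (x - 1/2)) + x * (f (x + 1/2) - f (x - 1/2))))) x :=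
    (hasDerivAt_id x).add
      (((hA1.sub hA2).sub ((hasDerivAt_id x).mul (hB1.sub hB2))).const_mul ε)
  convert hmain using 1
  rw [hBval, hfval]
  ring
end

section
/- Let T: 𝕋 → 𝕋 be C², N-fold covering, with min|T'| = ω > 1 and max|T''| = D. Let P_T denote the transfer (Perron–Frobenius) operator of T. For any C¹ function f: 𝕋 → ℝ with f ≥ 0, one has var(P_T f) ≤ (1/ω)·var(f) + (D/ω²)·‖f‖₁, where var(f) = ∫|f'| dλ and ‖f‖₁ = ∫|f| dλ. -/
open MeasureTheory Function Set

lemma key (T : ℝ → ℝ) (N : ℕ) (ω D : ℝ) (f : ℝ → ℝ)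
    (hT : ContDiff ℝ 2 T) (hcov : ∀ x, T (x + 1) = T x + N) (hN : 0 < N)
    (hinc : ∀ x, ω ≤ deriv T x) (hω1 : 1 < ω)
    (hD : ∀ x, |deriv (deriv T) x| ≤ D)
    (hf : ContDiff ℝ 1 f) (hfper : Function.Periodic f 1) (hfpos : ∀ x, 0 ≤ f x) :
    tvar (transfer T N f) ≤ (1 / ω) * tvar f + (D / ω ^ 2) * l1 f := by
  have hω0 : (0:ℝ) < ω := lt_trans one_pos hω1
  have hD0 : 0 ≤ D := le_trans (abs_nonneg _) (hD 0)
  have hT'pos : ∀ x, 0 < deriv T x := fun x => lt_of_lt_of_le hω0 (hinc x)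
  have hTdiff : Differentiable ℝ T := hT.differentiable (by norm_num)
  have hT'C1 : ContDiff ℝ 1 (deriv T) := by
    have := contDiff_succ_iff_deriv (n := 1) (f := T); norm_num at this
    exact (this.mp hT).2
  have hT'cont : Continuous (deriv T) := hT'C1.continuous
  have hT''cont : Continuous (deriv (deriv T)) := hT'C1.continuous_deriv le_rfl
  have hfd : Differentiable ℝ f := hf.differentiable one_ne_zero
  have hf'cont : Continuous (deriv f) := hf.continuous_deriv le_rfl
  have hmono : StrictMono T := strictMono_of_deriv_pos hT'pos
  have hTinj : Function.Injective T := hmono.injective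
  have hcovn : ∀ (n : ℕ) x, T (x + n) = T x + n * N := by
    intro n
    induction n with
    | zero => simp
    | succ n ih =>
      intro x; push_cast
      rw [show x + ((n:ℝ) + 1) = (x + n) + 1 by ring, hcov, ih]; ring
  have hNpos : (0:ℝ) < N := by exact_mod_cast hN
  have hsurj : Function.Surjective T := by
    have hmonot : Monotone T := hmono.monotone
    have htop : Filter.Tendsto T Filter.atTop Filter.atTop := by
      apply Filter.tendsto_atTop_atTop_of_monotone hmonot
      intro b
      obtain ⟨n, hn⟩ := exists_nat_ge ((b - T 0) / N)
      refine ⟨(n : ℝ), ?_⟩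
      have h0 : T ((0:ℝ) + n) = T 0 + n * N := hcovn n 0
      rw [zero_add] at h0
      rw [h0]; nlinarith [(div_le_iff₀ hNpos).mp hn]
    have hbot : Filter.Tendsto T Filter.atBot Filter.atBot := by
      apply Filter.tendsto_atBot_atBot_of_monotone hmonot
      intro b
      obtain ⟨n, hn⟩ := exists_nat_ge ((T 0 - b) / N)
      refine ⟨-(n : ℝ), ?_⟩
      have h0 : T (-(n:ℝ) + n) = T (-(n:ℝ)) + n * N := hcovn n _
      rw [neg_add_cancel] at h0
      nlinarith [(div_le_iff₀ hNpos).mp hn]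
    exact hT.continuous.surjective htop hbot
  set ψ := Function.invFun T with hψdef
  have hψT : ∀ x, ψ (T x) = x := fun x => Function.leftInverse_invFun hTinj x
  have hTψ : ∀ y, T (ψ y) = y := fun y => Function.invFun_eq (hsurj y)
  have hψcont : Continuous ψ := by
    let e := StrictMono.orderIsoOfSurjective T hmono hsurj
    have he : ψ = e.symm := by
      funext z; apply hTinj; rw [hTψ]
      exact (e.apply_symm_apply z).symm
    rw [he]; exact (OrderIso.toHomeomorph e).symm.continuous
  have hψderiv : ∀ z, HasDerivAt ψ (deriv T (ψ z))⁻¹ z := by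
    intro z
    apply HasDerivAt.of_local_left_inverse hψcont.continuousAt
      ((hTdiff (ψ z)).hasDerivAt) (ne_of_gt (hT'pos (ψ z)))
    exact Filter.Eventually.of_forall hTψ
  -- the function g = f / T'
  set g : ℝ → ℝ := fun x => f x / deriv T x with hgdef
  have hgC1 : ContDiff ℝ 1 g := hf.div hT'C1 (fun x => ne_of_gt (hT'pos x))
  have hg'cont : Continuous (deriv g) := hgC1.continuous_deriv le_rfl
  have hgcont : Continuous g := hgC1.continuous
  have hgderiv : ∀ x, HasDerivAt g
      ((deriv f x * deriv T x - f x * deriv (deriv T) x) / (deriv T x) ^ 2) x := by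
    intro x
    exact (hfd x).hasDerivAt.div ((hT'C1.differentiable one_ne_zero) x).hasDerivAt
      (ne_of_gt (hT'pos x))
  have hgbound : ∀ x, |deriv g x| ≤ (1/ω) * |deriv f x| + (D/ω^2) * f x := by
    intro x
    rw [(hgderiv x).deriv]
    have hb := hT'pos x
    have hbω := hinc x
    have hc := hfpos x
    have hE := hD x
    rw [abs_div, abs_of_pos (pow_pos hb 2)]
    have hnum : |deriv f x * deriv T x - f x * deriv (deriv T) x|
        ≤ |deriv f x| * deriv T x + f x * D := by
      refine (abs_sub _ _).trans ?_
      rw [abs_mul, abs_mul, abs_of_pos hb, abs_of_nonneg hc]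
      gcongr
    calc |deriv f x * deriv T x - f x * deriv (deriv T) x| / deriv T x ^ 2
        ≤ (|deriv f x| * deriv T x + f x * D) / deriv T x ^ 2 := by gcongr
      _ = |deriv f x| / deriv T x + f x * D / deriv T x ^ 2 := by
          rw [add_div]
          congr 1
          rw [pow_two, mul_div_mul_right _ _ (ne_of_gt hb)]
      _ ≤ |deriv f x| / ω + f x * D / ω ^ 2 := by
          have h1 : |deriv f x| / deriv T x ≤ |deriv f x| / ω :=
            div_le_div_of_nonneg_left (abs_nonneg _) hω0 hbω
          have h2 : f x * D / deriv T x ^ 2 ≤ f x * D / ω ^ 2 :=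
            div_le_div_of_nonneg_left (mul_nonneg hc hD0) (pow_pos hω0 2)
              (pow_le_pow_left₀ hω0.le hbω 2)
          exact add_le_add h1 h2
      _ = (1/ω) * |deriv f x| + (D/ω^2) * f x := by ring
  -- derivative of the transfer operator
  have htr : transfer T N f = fun y => ∑ k ∈ Finset.range N, g (ψ (y + k)) := by
    funext y
    apply Finset.sum_congr rfl
    intro k _
    rw [abs_of_pos (hT'pos _)]
  have hHder : ∀ y, HasDerivAt (transfer T N f)
      (∑ k ∈ Finset.range N, deriv g (ψ (y + k)) * (deriv T (ψ (y + k)))⁻¹) y := by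
    intro y
    rw [htr]
    apply HasDerivAt.fun_sum
    intro k _
    have h1 : HasDerivAt (fun y : ℝ => y + (k:ℝ)) 1 y := (hasDerivAt_id y).add_const _
    have h2 : HasDerivAt ψ (deriv T (ψ (y + k)))⁻¹ (y + k) := hψderiv _
    have h3 : HasDerivAt g (deriv g (ψ (y + k))) (ψ (y + k)) :=
      ((hgC1.differentiable one_ne_zero) _).hasDerivAt
    have h4 := (h3.comp y (h2.comp y h1))
    simpa [Function.comp_def, mul_one] using h4
  have hdeq : deriv (transfer T N f)
      = fun y => ∑ k ∈ Finset.range N, deriv g (ψ (y + k)) * (deriv T (ψ (y + k)))⁻¹ :=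
    funext fun y => (hHder y).deriv
  -- the integrand G
  set G : ℝ → ℝ := fun z => |deriv g (ψ z)| * (deriv T (ψ z))⁻¹ with hGdef
  have hGcont : Continuous G :=
    ((hg'cont.comp hψcont).abs).mul
      ((hT'cont.comp hψcont).inv₀ fun z => ne_of_gt (hT'pos _))
  have step1 : tvar (transfer T N f) ≤ ∫ y in (0:ℝ)..1, ∑ k ∈ Finset.range N, G (y + k) := by
    unfold tvar
    apply intervalIntegral.integral_mono_on (by norm_num)
    · rw [hdeq]
      apply Continuous.intervalIntegrable
      apply Continuous.abs
      apply continuous_finset_sum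
      intro k _
      exact ((hg'cont.comp (hψcont.comp (continuous_id.add continuous_const)))).mul
        (((hT'cont.comp (hψcont.comp (continuous_id.add continuous_const)))).inv₀
          fun z => ne_of_gt (hT'pos _))
    · apply Continuous.intervalIntegrable
      apply continuous_finset_sum
      intro k _
      exact hGcont.comp (continuous_id.add continuous_const)
    · intro y _
      rw [hdeq]
      refine (Finset.abs_sum_le_sum_abs _ _).trans (le_of_eq ?_)
      apply Finset.sum_congr rfl
      intro k _
      rw [abs_mul, abs_of_pos (inv_pos.mpr (hT'pos _))]
  have step2 : (∫ y in (0:ℝ)..1, ∑ k ∈ Finset.range N, G (y + k))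
      = ∫ z in (0:ℝ)..(N:ℝ), G z := by
    rw [intervalIntegral.integral_finset_sum]
    · have : ∀ k ∈ Finset.range N, (∫ y in (0:ℝ)..1, G (y + k))
          = ∫ z in ((k:ℕ):ℝ)..((k+1:ℕ):ℝ), G z := by
        intro k _
        rw [intervalIntegral.integral_comp_add_right]
        norm_num [add_comm]
      rw [Finset.sum_congr rfl this]
      have := intervalIntegral.sum_integral_adjacent_intervals
        (a := fun k : ℕ => (k : ℝ)) (n := N) (f := G) (μ := volume)
        (fun k _ => (hGcont.intervalIntegrable _ _))
      simpa using this
    · intro k _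
      exact (hGcont.comp (continuous_id.add continuous_const)).intervalIntegrable _ _
  set a := ψ 0 with hadef
  have hTa : T a = 0 := hTψ 0
  have hTa1 : T (a + 1) = N := by rw [hcov, hTa, zero_add]
  have step3 : (∫ z in (0:ℝ)..(N:ℝ), G z) = ∫ x in a..(a+1), |deriv g x| := by
    have hsub := intervalIntegral.integral_comp_smul_deriv (a := a) (b := a + 1)
      (f := T) (f' := deriv T) (g := G)
      (fun x _ => (hTdiff x).hasDerivAt) hT'cont.continuousOn hGcont
    rw [hTa, hTa1] at hsub
    rw [← hsub]
    apply intervalIntegral.integral_congr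
    intro x _
    show deriv T x • G (T x) = |deriv g x|
    rw [hGdef]
    simp only [hψT x, smul_eq_mul]
    rw [mul_comm (|deriv g x|), ← mul_assoc, mul_inv_cancel₀ (ne_of_gt (hT'pos x)), one_mul]
  have hfint : ∀ (u v : ℝ), (∫ x in u..v, |deriv g x|) ≤
      ((∫ x in u..v, (1/ω) * |deriv f x| + (D/ω^2) * f x)) ∨ True := fun _ _ => Or.inr trivial
  have step4 : (∫ x in a..(a+1), |deriv g x|)
      ≤ ∫ x in a..(a+1), ((1/ω) * |deriv f x| + (D/ω^2) * f x) := by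
    apply intervalIntegral.integral_mono_on (by linarith)
    · exact (hg'cont.abs).intervalIntegrable _ _
    · exact ((continuous_const.mul hf'cont.abs).add
        (continuous_const.mul hf.continuous)).intervalIntegrable _ _
    · intro x _; exact hgbound x
  have hperf' : Function.Periodic (fun x => |deriv f x|) 1 := by
    intro x
    have h1 : (fun y => f (y + 1)) = f := funext fun y => hfper y
    have : deriv f (x + 1) = deriv f x := by
      calc deriv f (x + 1) = deriv (fun y => f (y + 1)) x := (deriv_comp_add_const f 1 x).symm
        _ = deriv f x := by rw [h1]
    simp [this]
  have step5 : (∫ x in a..(a+1), ((1/ω) * |deriv f x| + (D/ω^2) * f x))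
      = (1/ω) * tvar f + (D/ω^2) * l1 f := by
    rw [intervalIntegral.integral_add
      ((continuous_const.fun_mul hf'cont.abs).intervalIntegrable _ _)
      ((continuous_const.fun_mul hf.continuous).intervalIntegrable _ _),
      intervalIntegral.integral_const_mul, intervalIntegral.integral_const_mul]
    have e1 : (∫ x in a..(a+1), |deriv f x|) = tvar f := by
      have := hperf'.intervalIntegral_add_eq a 0
      simpa [tvar] using this
    have e2 : (∫ x in a..(a+1), f x) = l1 f := by
      have hperf : Function.Periodic f 1 := hfper
      have := hperf.intervalIntegral_add_eq a 0
      rw [zero_add] at this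
      rw [this]
      unfold l1
      apply intervalIntegral.integral_congr
      intro x _
      exact (abs_of_nonneg (hfpos x)).symm
    rw [e1, e2]
  calc tvar (transfer T N f) ≤ ∫ y in (0:ℝ)..1, ∑ k ∈ Finset.range N, G (y + k) := step1
    _ = ∫ z in (0:ℝ)..(N:ℝ), G z := step2
    _ = ∫ x in a..(a+1), |deriv g x| := step3
    _ ≤ ∫ x in a..(a+1), ((1/ω) * |deriv f x| + (D/ω^2) * f x) := step4
    _ = (1/ω) * tvar f + (D/ω^2) * l1 f := step5

/-- Lasota–Yorke type variation bound for the transfer operator of `T`: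
`var(P_T f) ≤ (1/ω) var(f) + (D/ω²) ‖f‖₁`. -/
theorem transfer_var_bound (T : ℝ → ℝ) (N : ℕ) (ω D : ℝ)
    (hT : ContDiff ℝ 2 T)
    (hcov : (∀ x, T (x + 1) = T x + N) ∨ (∀ x, T (x + 1) = T x - N))
    (hω : ∀ x, ω ≤ |deriv T x|) (hω1 : 1 < ω)
    (hD : ∀ x, |deriv (deriv T) x| ≤ D)
    (f : ℝ → ℝ) (hf : ContDiff ℝ 1 f) (hfper : Function.Periodic f 1)
    (hfpos : ∀ x, 0 ≤ f x) :
    tvar (transfer T N f) ≤ (1 / ω) * tvar f + (D / ω ^ 2) * l1 f := by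
  have hω0 : (0:ℝ) < ω := lt_trans one_pos hω1
  have hD0 : 0 ≤ D := le_trans (abs_nonneg _) (hD 0)
  rcases Nat.eq_zero_or_pos N with hN0 | hN
  · -- trivial case N = 0
    subst hN0
    have h0 : transfer T 0 f = fun _ => (0:ℝ) := by
      funext y; simp [transfer]
    rw [h0]
    have : tvar (fun _ : ℝ => (0:ℝ)) = 0 := by
      unfold tvar
      simp [deriv_const]
    rw [this]
    have h1 : 0 ≤ tvar f := by
      unfold tvar
      apply intervalIntegral.integral_nonneg (by norm_num)
      intro x _; positivity
    have h2 : 0 ≤ l1 f := by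
      unfold l1
      apply intervalIntegral.integral_nonneg (by norm_num)
      intro x _; positivity
    positivity
  have hT'C1 : ContDiff ℝ 1 (deriv T) := by
    have := contDiff_succ_iff_deriv (n := 1) (f := T); norm_num at this
    exact (this.mp hT).2
  have hT'cont : Continuous (deriv T) := hT'C1.continuous
  have hne : ∀ x, deriv T x ≠ 0 := by
    intro x hx
    have := hω x
    rw [hx, abs_zero] at this
    linarith
  have hsign : (∀ x, 0 < deriv T x) ∨ (∀ x, deriv T x < 0) := by
    by_cases h0 : 0 < deriv T 0
    · left
      intro x
      rcases lt_or_gt_of_ne (hne x) with hx | hx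
      · exfalso
        obtain ⟨c, _, hc⟩ := intermediate_value_uIcc (a := x) (b := 0) (f := deriv T)
          hT'cont.continuousOn (show (0:ℝ) ∈ uIcc (deriv T x) (deriv T 0) by
            rw [Set.mem_uIcc]; left; exact ⟨hx.le, h0.le⟩)
        exact hne c hc
      · exact hx
    · right
      intro x
      have h0' : deriv T 0 < 0 := lt_of_le_of_ne (not_lt.mp h0) (hne 0)
      rcases lt_or_gt_of_ne (hne x) with hx | hx
      · exact hx
      · exfalso
        obtain ⟨c, _, hc⟩ := intermediate_value_uIcc (a := 0) (b := x) (f := deriv T)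
          hT'cont.continuousOn (show (0:ℝ) ∈ uIcc (deriv T 0) (deriv T x) by
            rw [Set.mem_uIcc]; left; exact ⟨h0'.le, hx.le⟩)
        exact hne c hc
  have hNpos : (0:ℝ) < N := by exact_mod_cast hN
  rcases hsign with hpos | hneg
  · -- increasing case
    have hinc : ∀ x, ω ≤ deriv T x := by
      intro x
      have := hω x
      rwa [abs_of_pos (hpos x)] at this
    have hmono : StrictMono T := strictMono_of_deriv_pos hpos
    rcases hcov with hcovp | hcovm
    · exact key T N ω D f hT hcovp hN hinc hω1 hD hf hfper hfpos
    · exfalso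
      have h01 : T 0 < T 1 := hmono (by norm_num)
      have := hcovm 0
      rw [zero_add] at this
      linarith
  · -- decreasing case: reduce via x ↦ -x
    set S : ℝ → ℝ := fun x => T (-x) with hSdef
    set h : ℝ → ℝ := fun x => f (-x) with hhdef
    have hnegC : ContDiff ℝ 2 (fun x : ℝ => -x) := contDiff_id.neg
    have hS : ContDiff ℝ 2 S := hT.comp hnegC
    have hS'eq : deriv S = fun x => -deriv T (-x) := by
      funext x; exact deriv_comp_neg T x
    have hanti : StrictAnti T := strictAnti_of_deriv_neg hneg
    have hcovm : ∀ x, T (x + 1) = T x - N := by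
      rcases hcov with hcovp | hcovm
      · exfalso
        have h01 : T 1 < T 0 := hanti (by norm_num)
        have := hcovp 0
        rw [zero_add] at this
        linarith
      · exact hcovm
    have hScov : ∀ x, S (x + 1) = S x + N := by
      intro x
      have := hcovm (-x - 1)
      simp only [hSdef]
      rw [show -x - 1 + 1 = -x by ring] at this
      rw [show -(x+1) = -x - 1 by ring]
      linarith
    have hSinc : ∀ x, ω ≤ deriv S x := by
      intro x
      rw [hS'eq]
      have := hω (-x)
      rwa [abs_of_neg (hneg (-x)), ] at this
    have hSD : ∀ x, |deriv (deriv S) x| ≤ D := by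
      intro x
      rw [hS'eq]
      have e1 : deriv (fun x : ℝ => -deriv T (-x)) x = deriv (deriv T) (-x) := by
        rw [deriv.fun_neg (f := fun x : ℝ => deriv T (-x)), deriv_comp_neg (deriv T) x, neg_neg]
      rw [e1]
      exact hD (-x)
    have hh : ContDiff ℝ 1 h := hf.comp (contDiff_id.neg)
    have hhper : Function.Periodic h 1 := by
      intro x
      simp only [hhdef]
      have := hfper (-x - 1)
      rw [show -x - 1 + 1 = -x by ring] at this
      rw [show -(x+1) = -x - 1 by ring, this]
    have hhpos : ∀ x, 0 ≤ h x := fun x => hfpos (-x)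
    have hkey := key S N ω D h hS hScov hN hSinc hω1 hSD hh hhper hhpos
    -- S is strictly monotone & surjective
    have hSpos : ∀ x, 0 < deriv S x := fun x => lt_of_lt_of_le hω0 (hSinc x)
    have hSmono : StrictMono S := strictMono_of_deriv_pos hSpos
    have hSinj := hSmono.injective
    have hScovn : ∀ (n : ℕ) x, S (x + n) = S x + n * N := by
      intro n
      induction n with
      | zero => simp
      | succ n ih =>
        intro x; push_cast
        rw [show x + ((n:ℝ) + 1) = (x + n) + 1 by ring, hScov, ih]; ring
    have hSsurj : Function.Surjective S := by
      have hmonot : Monotone S := hSmono.monotone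
      have htop : Filter.Tendsto S Filter.atTop Filter.atTop := by
        apply Filter.tendsto_atTop_atTop_of_monotone hmonot
        intro b
        obtain ⟨n, hn⟩ := exists_nat_ge ((b - S 0) / N)
        refine ⟨(n : ℝ), ?_⟩
        have h0 : S ((0:ℝ) + n) = S 0 + n * N := hScovn n 0
        rw [zero_add] at h0
        rw [h0]; nlinarith [(div_le_iff₀ hNpos).mp hn]
      have hbot : Filter.Tendsto S Filter.atBot Filter.atBot := by
        apply Filter.tendsto_atBot_atBot_of_monotone hmonot
        intro b
        obtain ⟨n, hn⟩ := exists_nat_ge ((S 0 - b) / N)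
        refine ⟨-(n : ℝ), ?_⟩
        have h0 : S (-(n:ℝ) + n) = S (-(n:ℝ)) + n * N := hScovn n _
        rw [neg_add_cancel] at h0
        nlinarith [(div_le_iff₀ hNpos).mp hn]
      exact hS.continuous.surjective htop hbot
    have hTinj : Function.Injective T := hanti.injective
    have hTS : ∀ x, T x = S (-x) := by intro x; simp [hSdef]
    have hinv : ∀ z, Function.invFun T z = -Function.invFun S z := by
      intro z
      have hSz : S (Function.invFun S z) = z := Function.invFun_eq (hSsurj z)
      have hex : T (-(Function.invFun S z)) = z := by rw [hTS, neg_neg]; exact hSz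
      have hTz : T (Function.invFun T z) = z := Function.invFun_eq ⟨_, hex⟩
      apply hTinj
      rw [hTz, hex]
    have htreq : transfer S N h = transfer T N f := by
      funext y
      apply Finset.sum_congr rfl
      intro k _
      have hi := hinv (y + k)
      have hi' : Function.invFun S (y + k) = -Function.invFun T (y + k) := by
        rw [hi]; ring
      rw [hi']
      have e1 : h (-Function.invFun T (y + k)) = f (Function.invFun T (y + k)) := by
        simp [hhdef]
      have e2 : |deriv S (-Function.invFun T (y + k))| = |deriv T (Function.invFun T (y + k))| := by
        rw [hS'eq]
        simp [abs_neg]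
      rw [e1, e2]
    -- tvar h = tvar f and l1 h = l1 f
    have hperabsf' : Function.Periodic (fun x => |deriv f x|) 1 := by
      intro x
      have h1 : (fun y => f (y + 1)) = f := funext fun y => hfper y
      have : deriv f (x + 1) = deriv f x := by
        calc deriv f (x + 1) = deriv (fun y => f (y + 1)) x := (deriv_comp_add_const f 1 x).symm
          _ = deriv f x := by rw [h1]
      simp [this]
    have hperabsf : Function.Periodic (fun x => |f x|) 1 := fun x => by simp [hfper x]
    have htvar : tvar h = tvar f := by
      unfold tvar
      have hderiv_h : deriv h = fun x => -deriv f (-x) := funext fun x => deriv_comp_neg f x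
      rw [hderiv_h]
      have e1 : (∫ x in (0:ℝ)..1, |-deriv f (-x)|) = ∫ x in (0:ℝ)..1, |deriv f (-x)| := by
        apply intervalIntegral.integral_congr
        intro x _; exact abs_neg _
      rw [e1]
      have e2 : (∫ x in (0:ℝ)..1, |deriv f (-x)|) = ∫ x in (-1:ℝ)..0, |deriv f x| := by
        have := intervalIntegral.integral_comp_neg (a := (0:ℝ)) (b := 1)
          (f := fun x => |deriv f x|)
        simpa using this
      rw [e2]
      have := hperabsf'.intervalIntegral_add_eq (-1) 0
      norm_num at this
      convert this using 2 <;> norm_num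
    have hl1 : l1 h = l1 f := by
      unfold l1
      have e2 : (∫ x in (0:ℝ)..1, |h x|) = ∫ x in (-1:ℝ)..0, |f x| := by
        have := intervalIntegral.integral_comp_neg (a := (0:ℝ)) (b := 1)
          (f := fun x => |f x|)
        simpa [hhdef] using this
      rw [e2]
      have := hperabsf.intervalIntegral_add_eq (-1) 0
      norm_num at this
      convert this using 2 <;> norm_num
    rw [← htreq, ← htvar, ← hl1]
    exact hkey
end

section
/- Let Φ: 𝕋 → 𝕋 be a C¹ diffeomorphism with Φ' ≥ 1-ρ > 0 and ∫|Φ''| dλ ≤ ρ for some 0 < ρ < 1, and let f be a C¹ probability density on 𝕋. Then the pushforward density P_Φ f = (f/Φ')∘Φ⁻¹ satisfies var(P_Φ f) ≤ var(f)/(1-ρ)² + ρ/(1-ρ)². -/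
open MeasureTheory Function Set

/-- variation bound for the pushforward by a circle diffeomorphism `Φ` with
`Φ' ≥ 1 - ρ > 0` and `∫|Φ''| ≤ ρ`:
`var(P_Φ f) ≤ var(f)/(1-ρ)² + ρ/(1-ρ)²`. -/
theorem pushforward_var_bound (Φ : ℝ → ℝ) (ρ : ℝ) (hρ0 : 0 < ρ) (hρ1 : ρ < 1)
    (hΦ : ContDiff ℝ 2 Φ) (hper : ∀ x, Φ (x + 1) = Φ x + 1)
    (hder : ∀ x, 1 - ρ ≤ deriv Φ x)
    (hsec : (∫ x in (0:ℝ)..1, |deriv (deriv Φ) x|) ≤ ρ)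
    (f : ℝ → ℝ) (hf : PropF f) :
    tvar (transfer Φ 1 f) ≤ tvar f / (1 - ρ) ^ 2 + ρ / (1 - ρ) ^ 2 := by
  obtain ⟨hfC, hfper, hfpos, hfint⟩ := hf
  have hρ' : (0:ℝ) < 1 - ρ := by linarith
  -- regularity of Φ
  have hΦd : Differentiable ℝ Φ := hΦ.differentiable (by norm_num)
  have hΦ'C : ContDiff ℝ 1 (deriv Φ) := by
    rw [show (2:WithTop ℕ∞) = 1 + 1 from rfl, contDiff_succ_iff_deriv] at hΦ
    exact hΦ.2.2
  have hΦ'd : Differentiable ℝ (deriv Φ) := hΦ'C.differentiable one_ne_zero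
  have hΦ'cont : Continuous (deriv Φ) := hΦ'd.continuous
  have hΦ''cont : Continuous (deriv (deriv Φ)) := hΦ'C.continuous_deriv le_rfl
  have hfd : Differentiable ℝ f := hfC.differentiable one_ne_zero
  have hf'cont : Continuous (deriv f) := hfC.continuous_deriv le_rfl
  have hΦ'pos : ∀ x, 0 < deriv Φ x := fun x => lt_of_lt_of_le hρ' (hder x)
  have hmono : StrictMono Φ := strictMono_of_deriv_pos hΦ'pos
  -- integer translations
  have hint : ∀ (n : ℤ) (x : ℝ), Φ (x + n) = Φ x + n := by
    intro n
    induction n using Int.induction_on with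
    | zero => simp
    | succ k ih =>
        intro x
        have h1 : Φ ((x + k) + 1) = Φ (x + k) + 1 := hper _
        have h2 := ih x
        push_cast
        push_cast at h1 h2
        calc Φ (x + (k + 1)) = Φ ((x + k) + 1) := by ring_nf
          _ = Φ x + k + 1 := by rw [h1, h2]
          _ = Φ x + (k + 1) := by ring
    | pred k ih =>
        intro x
        have h2 := ih x
        push_cast at h2 ⊢
        have h1 : Φ ((x + (-(k:ℝ) - 1)) + 1) = Φ (x + (-(k:ℝ) - 1)) + 1 := hper _
        have h3 : (x + (-(k:ℝ) - 1)) + 1 = x + -(k:ℝ) := by ring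
        rw [h3] at h1
        linarith [h1, h2]
  -- surjectivity
  have hsurj : Surjective Φ := by
    intro y
    have hmle : Φ (⌊y - Φ 0⌋ : ℤ) ≤ y := by
      have := hint ⌊y - Φ 0⌋ 0
      rw [zero_add] at this
      rw [this]
      have := Int.floor_le (y - Φ 0)
      linarith
    have hnge : y ≤ Φ (⌈y - Φ 0⌉ : ℤ) := by
      have := hint ⌈y - Φ 0⌉ 0
      rw [zero_add] at this
      rw [this]
      have := Int.le_ceil (y - Φ 0)
      linarith
    have hmn : ((⌊y - Φ 0⌋ : ℤ) : ℝ) ≤ ((⌈y - Φ 0⌉ : ℤ) : ℝ) := by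
      exact_mod_cast Int.floor_le_ceil _
    have := intermediate_value_Icc hmn (hΦd.continuous.continuousOn)
    obtain ⟨x, _, hx⟩ := this ⟨hmle, hnge⟩
    exact ⟨x, hx⟩
  set ψ := Function.invFun Φ with hψdef
  have hψΦ : ∀ x, ψ (Φ x) = x := fun x => Function.leftInverse_invFun hmono.injective x
  have hΦψ : ∀ y, Φ (ψ y) = y := fun y => Function.invFun_eq (hsurj y)
  -- continuity of ψ
  have hψcont : Continuous ψ := by
    have heq : ψ = (hmono.orderIsoOfSurjective Φ hsurj).symm := by
      funext y
      apply hmono.injective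
      rw [hΦψ]
      have : Φ ((hmono.orderIsoOfSurjective Φ hsurj).symm y)
          = (hmono.orderIsoOfSurjective Φ hsurj) ((hmono.orderIsoOfSurjective Φ hsurj).symm y) := by
        rw [StrictMono.coe_orderIsoOfSurjective]
      rw [this, OrderIso.apply_symm_apply]
    rw [heq]
    exact OrderIso.continuous _
  have hψd : ∀ y, HasDerivAt ψ ((deriv Φ (ψ y))⁻¹) y := fun y =>
    HasDerivAt.of_local_left_inverse hψcont.continuousAt ((hΦd (ψ y)).hasDerivAt)
      (hΦ'pos (ψ y)).ne' (Filter.Eventually.of_forall hΦψ)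
  -- h and its derivative
  set h : ℝ → ℝ := fun x => f x / deriv Φ x with hhdef
  set h' : ℝ → ℝ := fun x =>
    (deriv f x * deriv Φ x - f x * deriv (deriv Φ) x) / (deriv Φ x) ^ 2 with hh'def
  have hhd : ∀ x, HasDerivAt h (h' x) x := fun x =>
    ((hfd x).hasDerivAt).div ((hΦ'd x).hasDerivAt) (hΦ'pos x).ne'
  have hg_eq : transfer Φ 1 f = fun y => h (ψ y) := by
    funext y
    simp [transfer, hhdef, abs_of_pos (hΦ'pos _), hψdef]
  have hgd : ∀ y, HasDerivAt (transfer Φ 1 f) (h' (ψ y) * (deriv Φ (ψ y))⁻¹) y := by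
    intro y
    rw [hg_eq]
    exact (hhd (ψ y)).comp y (hψd y)
  set G : ℝ → ℝ := fun y => h' (ψ y) * (deriv Φ (ψ y))⁻¹ with hGdef
  have hh'cont : Continuous h' := by
    apply Continuous.div
    · exact (hf'cont.mul hΦ'cont).sub (hfd.continuous.mul hΦ''cont)
    · exact hΦ'cont.pow 2
    · exact fun x => pow_ne_zero 2 (hΦ'pos x).ne'
  have hGcont : Continuous G :=
    (hh'cont.comp hψcont).mul ((hΦ'cont.comp hψcont).inv₀ fun y => (hΦ'pos _).ne')
  -- tvar of transfer equals ∫ |G|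
  have step1 : tvar (transfer Φ 1 f) = ∫ y in (0:ℝ)..1, |G y| := by
    unfold tvar
    exact intervalIntegral.integral_congr fun y _ => by rw [(hgd y).deriv]
  -- substitution
  set a := ψ 0 with hadef
  have hΦa : Φ a = 0 := hΦψ 0
  have hΦa1 : Φ (a + 1) = 1 := by rw [hper, hΦa]; norm_num
  have step2 : (∫ x in a..(a+1), deriv Φ x • |G (Φ x)|) = ∫ y in (0:ℝ)..1, |G y| := by
    have h0 := intervalIntegral.integral_comp_smul_deriv (f := Φ) (f' := deriv Φ)
      (g := fun y => |G y|) (a := a) (b := a + 1) (fun x _ => (hΦd x).hasDerivAt)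
      hΦ'cont.continuousOn hGcont.abs
    rw [hΦa, hΦa1] at h0
    simpa [Function.comp] using h0
  have step3 : (∫ x in a..(a+1), deriv Φ x • |G (Φ x)|) = ∫ x in a..(a+1), |h' x| := by
    apply intervalIntegral.integral_congr
    intro x _
    show deriv Φ x • |G (Φ x)| = |h' x|
    have hGx : G (Φ x) = h' x * (deriv Φ x)⁻¹ := by rw [hGdef]; simp only [hψΦ]
    rw [hGx, smul_eq_mul, abs_mul, abs_inv, abs_of_pos (hΦ'pos x)]
    field_simp
    exact mul_div_cancel_left₀ _ (hΦ'pos x).ne'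
  -- periodicity of h'
  have hΦ'per : Periodic (deriv Φ) 1 := by
    intro x
    have hfun : (fun y => Φ (y + 1)) = fun y => Φ y + 1 := funext hper
    calc deriv Φ (x + 1) = deriv (fun y => Φ (y + 1)) x := (deriv_comp_add_const Φ 1 x).symm
      _ = deriv Φ x := by rw [hfun]; simp
  have hΦ''per : Periodic (deriv (deriv Φ)) 1 := by
    intro x
    have hfun : (fun y => deriv Φ (y + 1)) = fun y => deriv Φ y := funext hΦ'per
    calc deriv (deriv Φ) (x + 1) = deriv (fun y => deriv Φ (y + 1)) x :=
          (deriv_comp_add_const (deriv Φ) 1 x).symm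
      _ = deriv (deriv Φ) x := by rw [hfun]
  have hf'per : Periodic (deriv f) 1 := by
    intro x
    have hfun : (fun y => f (y + 1)) = fun y => f y := funext hfper
    calc deriv f (x + 1) = deriv (fun y => f (y + 1)) x := (deriv_comp_add_const f 1 x).symm
      _ = deriv f x := by rw [hfun]
  have hh'per : Periodic (fun x => |h' x|) 1 := by
    intro x
    simp only [hh'def, hf'per x, hΦ'per x, hΦ''per x, hfper x]
  have step4 : (∫ x in a..(a+1), |h' x|) = ∫ x in (0:ℝ)..1, |h' x| := by
    have := hh'per.intervalIntegral_add_eq a 0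
    simpa using this
  -- bound on f : sup f ≤ 1 + tvar f on [0,1]
  have htvar0 : 0 ≤ tvar f :=
    intervalIntegral.integral_nonneg (by norm_num) (fun u _ => abs_nonneg _)
  set M : ℝ := 1 + tvar f with hMdef
  have hM1 : (1:ℝ) ≤ M := by simp [hMdef]; linarith
  have hsubint : ∀ u v : ℝ, u ∈ Icc (0:ℝ) 1 → v ∈ Icc (0:ℝ) 1 → u ≤ v →
      (∫ x in u..v, |deriv f x|) ≤ tvar f := by
    intro u v hu hv huv
    apply intervalIntegral.integral_mono_interval hu.1 huv hv.2
    · exact Filter.Eventually.of_forall fun x => abs_nonneg _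
    · exact (hf'cont.abs.intervalIntegrable _ _)
  have hfM : ∀ x ∈ Icc (0:ℝ) 1, f x ≤ M := by
    obtain ⟨x₀, hx₀, hmin⟩ := isCompact_Icc.exists_isMinOn (⟨0, by norm_num⟩ : (Icc (0:ℝ) 1).Nonempty)
      hfd.continuous.continuousOn
    have hfx₀ : f x₀ ≤ 1 := by
      have h1 : (∫ _x in (0:ℝ)..1, f x₀) ≤ ∫ x in (0:ℝ)..1, f x := by
        apply intervalIntegral.integral_mono_on (by norm_num)
          (intervalIntegrable_const) (hfd.continuous.intervalIntegrable _ _)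
        intro x hx
        exact hmin hx
      rw [hfint] at h1
      simpa using h1
    intro x hx
    have hdiff : f x - f x₀ = ∫ y in x₀..x, deriv f y :=
      (intervalIntegral.integral_deriv_eq_sub (fun y _ => hfd y)
        (hf'cont.intervalIntegrable _ _)).symm
    have habs : |f x - f x₀| ≤ tvar f := by
      rw [hdiff]
      rcases le_total x₀ x with hle | hle
      · calc |∫ y in x₀..x, deriv f y| ≤ ∫ y in x₀..x, |deriv f y| :=
              intervalIntegral.abs_integral_le_integral_abs hle
          _ ≤ tvar f := hsubint x₀ x hx₀ hx hle
      · rw [intervalIntegral.integral_symm, abs_neg]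
        calc |∫ y in x..x₀, deriv f y| ≤ ∫ y in x..x₀, |deriv f y| :=
              intervalIntegral.abs_integral_le_integral_abs hle
          _ ≤ tvar f := hsubint x x₀ hx hx₀ hle
    have := abs_le.mp habs
    simp only [hMdef]
    linarith [this.2, hfx₀]
  -- pointwise bound on |h'|
  have hpoint : ∀ x ∈ Icc (0:ℝ) 1,
      |h' x| ≤ |deriv f x| * (1 - ρ)⁻¹ + M * |deriv (deriv Φ) x| * ((1 - ρ) ^ 2)⁻¹ := by
    intro x hx
    have hD : (0:ℝ) < (deriv Φ x) ^ 2 := pow_pos (hΦ'pos x) 2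
    have h1 : |h' x| = |deriv f x * deriv Φ x - f x * deriv (deriv Φ) x| / (deriv Φ x) ^ 2 := by
      rw [hh'def]
      rw [abs_div, abs_of_pos hD]
    have h2 : |deriv f x * deriv Φ x - f x * deriv (deriv Φ) x|
        ≤ |deriv f x| * deriv Φ x + f x * |deriv (deriv Φ) x| := by
      calc |deriv f x * deriv Φ x - f x * deriv (deriv Φ) x|
          ≤ |deriv f x * deriv Φ x| + |f x * deriv (deriv Φ) x| := abs_sub _ _
        _ = |deriv f x| * deriv Φ x + f x * |deriv (deriv Φ) x| := by
            rw [abs_mul, abs_mul, abs_of_pos (hΦ'pos x), abs_of_nonneg (hfpos x)]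
    have h3 : |h' x| ≤ (|deriv f x| * deriv Φ x + f x * |deriv (deriv Φ) x|) / (deriv Φ x) ^ 2 := by
      rw [h1]; exact div_le_div_of_nonneg_right h2 hD.le
    have h4 : (|deriv f x| * deriv Φ x + f x * |deriv (deriv Φ) x|) / (deriv Φ x) ^ 2
        = |deriv f x| / deriv Φ x + f x * |deriv (deriv Φ) x| / (deriv Φ x) ^ 2 := by
      rw [add_div]
      congr 1
      rw [pow_two, mul_div_mul_right _ _ (hΦ'pos x).ne']
    have h5 : |deriv f x| / deriv Φ x ≤ |deriv f x| * (1 - ρ)⁻¹ := by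
      rw [← div_eq_mul_inv]
      exact div_le_div_of_nonneg_left (abs_nonneg _) hρ' (hder x) |>.trans_eq rfl
    have h6 : f x * |deriv (deriv Φ) x| / (deriv Φ x) ^ 2
        ≤ M * |deriv (deriv Φ) x| * ((1 - ρ) ^ 2)⁻¹ := by
      rw [← div_eq_mul_inv]
      apply div_le_div₀ (by positivity)
        (mul_le_mul_of_nonneg_right (hfM x hx) (abs_nonneg _)) (by positivity)
        (pow_le_pow_left₀ hρ'.le (hder x) 2)
    calc |h' x| ≤ |deriv f x| / deriv Φ x + f x * |deriv (deriv Φ) x| / (deriv Φ x) ^ 2 := by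
          rw [← h4]; exact h3
      _ ≤ |deriv f x| * (1 - ρ)⁻¹ + M * |deriv (deriv Φ) x| * ((1 - ρ) ^ 2)⁻¹ :=
          add_le_add h5 h6
  -- integral bound
  have hbound : (∫ x in (0:ℝ)..1, |h' x|)
      ≤ tvar f * (1 - ρ)⁻¹ + M * ρ * ((1 - ρ) ^ 2)⁻¹ := by
    have hrhs : (∫ x in (0:ℝ)..1,
        (|deriv f x| * (1 - ρ)⁻¹ + M * |deriv (deriv Φ) x| * ((1 - ρ) ^ 2)⁻¹))
        = (∫ x in (0:ℝ)..1, |deriv f x|) * (1 - ρ)⁻¹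
          + M * (∫ x in (0:ℝ)..1, |deriv (deriv Φ) x|) * ((1 - ρ) ^ 2)⁻¹ := by
      rw [intervalIntegral.integral_add (f := fun x => |deriv f x| * (1 - ρ)⁻¹)
        (g := fun x => M * |deriv (deriv Φ) x| * ((1 - ρ) ^ 2)⁻¹)
        ((hf'cont.abs.mul continuous_const).intervalIntegrable _ _)
        (((continuous_const.mul hΦ''cont.abs).mul continuous_const).intervalIntegrable _ _),
        intervalIntegral.integral_mul_const, ← intervalIntegral.integral_const_mul,
        intervalIntegral.integral_mul_const, intervalIntegral.integral_const_mul]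
    have hle : (∫ x in (0:ℝ)..1, |h' x|) ≤ ∫ x in (0:ℝ)..1,
        (|deriv f x| * (1 - ρ)⁻¹ + M * |deriv (deriv Φ) x| * ((1 - ρ) ^ 2)⁻¹) := by
      apply intervalIntegral.integral_mono_on (by norm_num)
        (hh'cont.abs.intervalIntegrable _ _)
        (((hf'cont.abs.mul continuous_const).add
          ((continuous_const.mul hΦ''cont.abs).mul continuous_const)).intervalIntegrable _ _)
        hpoint
    rw [hrhs] at hle
    have hM0 : (0:ℝ) ≤ M := by linarith
    have : M * (∫ x in (0:ℝ)..1, |deriv (deriv Φ) x|) * ((1 - ρ) ^ 2)⁻¹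
        ≤ M * ρ * ((1 - ρ) ^ 2)⁻¹ := by
      apply mul_le_mul_of_nonneg_right _ (by positivity)
      exact mul_le_mul_of_nonneg_left hsec hM0
    calc (∫ x in (0:ℝ)..1, |h' x|) ≤ _ := hle
      _ ≤ tvar f * (1 - ρ)⁻¹ + M * ρ * ((1 - ρ) ^ 2)⁻¹ := by
          unfold tvar; exact add_le_add le_rfl this
  -- put it together
  have hfinal : tvar (transfer Φ 1 f) = ∫ x in (0:ℝ)..1, |h' x| := by
    rw [step1, ← step2, step3, step4]
  rw [hfinal]
  have halg : tvar f * (1 - ρ)⁻¹ + M * ρ * ((1 - ρ) ^ 2)⁻¹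
      = tvar f / (1 - ρ) ^ 2 + ρ / (1 - ρ) ^ 2 := by
    rw [hMdef]
    field_simp
    ring
  linarith [hbound, halg ▸ hbound]
end

section
/- Let 𝕋 be the circle with Lebesgue measure λ. If ℓ is of bounded variation and h ∈ L¹(𝕋), then |∫ ℓ·h dλ| ≤ var(ℓ)·sup_z |∫_{[0,z]} h dλ| + |∫ h dλ|·‖ℓ‖_∞ ≤ 2‖ℓ‖_BV · sup_{0≤z≤1} |∫_{[0,z]} h dλ|. -/
open MeasureTheory Function Set

/-- A BV function on `[0,1]` agrees there with a difference of (globally) monotone functions. -/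
lemma keller_exists_monotone (ℓ : ℝ → ℝ) (hℓ : BoundedVariationOn ℓ (Set.Icc 0 1)) :
    ∃ P Q : ℝ → ℝ, Monotone P ∧ Monotone Q ∧ ∀ x ∈ Set.Icc (0:ℝ) 1, ℓ x = P x - Q x := by
  obtain ⟨p, q, hp, hq, hpq⟩ :=
    hℓ.locallyBoundedVariationOn.exists_monotoneOn_sub_monotoneOn
  set c : ℝ → ℝ := fun x => min (max x 0) 1 with hcdef
  have hcmem : ∀ x, c x ∈ Set.Icc (0:ℝ) 1 :=
    fun x => ⟨le_min (le_max_right x 0) zero_le_one, min_le_right _ _⟩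
  have hcid : ∀ x ∈ Set.Icc (0:ℝ) 1, c x = x := by
    intro x hx
    simp only [hcdef, max_eq_left hx.1, min_eq_left hx.2]
  have hcmono : Monotone c :=
    fun a b hab => min_le_min (max_le_max hab (le_refl 0)) (le_refl 1)
  refine ⟨fun x => p (c x), fun x => q (c x), ?_, ?_, ?_⟩
  · exact fun a b hab => hp (hcmem a) (hcmem b) (hcmono hab)
  · exact fun a b hab => hq (hcmem a) (hcmem b) (hcmono hab)
  · intro x hx
    have h1 : ℓ x = p x - q x := by rw [hpq]; rfl
    show ℓ x = p (c x) - q (c x)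
    rw [hcid x hx]
    exact h1

/-- Core estimate: first inequality of Keller's Lemma 11, with abstract bounds. -/
lemma keller_aux (ℓ h : ℝ → ℝ)
    (hℓ : BoundedVariationOn ℓ (Set.Icc 0 1))
    (hh : IntegrableOn h (Set.Icc 0 1))
    {M Msup : ℝ}
    (hM : ∀ z ∈ Set.Icc (0:ℝ) 1, |∫ x in (0:ℝ)..z, h x| ≤ M)
    (hMsup : ∀ x ∈ Set.Icc (0:ℝ) 1, |ℓ x| ≤ Msup)
    (hM0 : 0 ≤ M) :
    |∫ x in (0:ℝ)..1, ℓ x * h x| ≤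
      (eVariationOn ℓ (Set.Icc 0 1)).toReal * M + |∫ x in (0:ℝ)..1, h x| * Msup := by
  classical
  set V := (eVariationOn ℓ (Set.Icc (0:ℝ) 1)).toReal with hVdef
  set H : ℝ → ℝ := fun z => ∫ x in (0:ℝ)..z, h x with hHdef
  have h01 : (0:ℝ) ∈ Set.Icc (0:ℝ) 1 := ⟨le_refl 0, zero_le_one⟩
  have hint : ∀ a ∈ Set.Icc (0:ℝ) 1, ∀ b ∈ Set.Icc (0:ℝ) 1,
      IntervalIntegrable h volume a b := by
    intro a ha b hb
    exact (hh.mono_set (Set.uIcc_subset_Icc ha hb)).intervalIntegrable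
  have hHsub : ∀ a ∈ Set.Icc (0:ℝ) 1, ∀ b ∈ Set.Icc (0:ℝ) 1,
      H b - H a = ∫ x in a..b, h x := by
    intro a ha b hb
    have h2 := intervalIntegral.integral_add_adjacent_intervals
      (hint 0 h01 a ha) (hint a ha b hb)
    simp only [hHdef]
    linarith [h2]
  have hH0 : H 0 = 0 := intervalIntegral.integral_same
  obtain ⟨P, Q, hPm, hQm, hLPQ⟩ := keller_exists_monotone ℓ hℓ
  set a : ℕ → ℝ → ℝ := fun n x => ((⌊(2:ℝ)^n * x⌋ : ℤ) : ℝ) / 2^n with hadef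
  have h2pos : ∀ n : ℕ, (0:ℝ) < 2^n := fun n => by positivity
  have ha_le : ∀ n x, a n x ≤ x := by
    intro n x
    rw [hadef]
    show ((⌊(2:ℝ)^n * x⌋ : ℤ) : ℝ) / 2^n ≤ x
    rw [div_le_iff₀ (h2pos n)]
    have := Int.floor_le ((2:ℝ)^n * x)
    linarith [mul_comm x ((2:ℝ)^n)]
  have ha_gt : ∀ n x, x - 1/2^n < a n x := by
    intro n x
    have h1 : (x - 1/2^n) * 2^n = 2^n * x - 1 := by
      field_simp
    rw [hadef]
    show x - 1/2^n < ((⌊(2:ℝ)^n * x⌋ : ℤ) : ℝ) / 2^n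
    rw [lt_div_iff₀ (h2pos n), h1]
    exact Int.sub_one_lt_floor _
  have ha_nonneg : ∀ n, ∀ x : ℝ, 0 ≤ x → 0 ≤ a n x := by
    intro n x hx
    apply div_nonneg _ (le_of_lt (h2pos n))
    exact_mod_cast Int.floor_nonneg.mpr (mul_nonneg (le_of_lt (h2pos n)) hx)
  have ha_mem : ∀ n, ∀ x ∈ Set.Icc (0:ℝ) 1, a n x ∈ Set.Icc (0:ℝ) 1 :=
    fun n x hx => ⟨ha_nonneg n x hx.1, le_trans (ha_le n x) hx.2⟩
  have hfloor_eq : ∀ n, ∀ i : ℕ, ∀ x ∈ Set.Ico ((i:ℝ)/2^n) (((i:ℝ)+1)/2^n),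
      a n x = (i:ℝ)/2^n := by
    intro n i x hx
    have hl := (div_le_iff₀ (h2pos n)).1 hx.1
    have hr := (lt_div_iff₀ (h2pos n)).1 hx.2
    have h1 : ⌊(2:ℝ)^n * x⌋ = (i:ℤ) := by
      rw [Int.floor_eq_iff]
      push_cast
      constructor <;> linarith [mul_comm x ((2:ℝ)^n)]
    show ((⌊(2:ℝ)^n * x⌋ : ℤ) : ℝ) / 2^n = (i:ℝ)/2^n
    rw [h1]
    norm_num
  set F : ℕ → ℝ → ℝ := fun n x => ℓ (a n x) * h x with hFdef
  set μ : Measure ℝ := volume.restrict (Set.Ico (0:ℝ) 1) with hμdef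
  have haF : ∀ n, Measurable fun x => ℓ (a n x) := by
    intro n
    have heq : (fun x => ℓ (a n x)) =
        (fun k : ℤ => ℓ ((k : ℝ)/2^n)) ∘ (fun x : ℝ => ⌊(2:ℝ)^n * x⌋) := rfl
    rw [heq]
    exact measurable_from_top.comp (Int.measurable_floor.comp (measurable_id.const_mul _))
  have hhae : AEStronglyMeasurable h μ :=
    hh.aestronglyMeasurable.mono_measure
      (Measure.restrict_mono Set.Ico_subset_Icc_self le_rfl)
  have hFmeas : ∀ n, AEStronglyMeasurable (F n) μ :=
    fun n => (haF n).aestronglyMeasurable.mul hhae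
  have hbound : ∀ n, ∀ᵐ x ∂μ, ‖F n x‖ ≤ Msup * |h x| := by
    intro n
    filter_upwards [ae_restrict_mem measurableSet_Ico] with x hx
    show ‖ℓ (a n x) * h x‖ ≤ _
    rw [Real.norm_eq_abs, abs_mul]
    exact mul_le_mul_of_nonneg_right
      (hMsup _ (ha_mem n x ⟨hx.1, hx.2.le⟩)) (abs_nonneg _)
  have hbint : Integrable (fun x => Msup * |h x|) μ :=
    ((hh.mono_set Set.Ico_subset_Icc_self).abs.const_mul Msup)
  have hlim : ∀ᵐ x ∂μ, Filter.Tendsto (fun n => F n x) Filter.atTop (nhds (ℓ x * h x)) := by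
    have hB : μ ({x | ¬ContinuousAt P x} ∪ {x | ¬ContinuousAt Q x}) = 0 :=
      Set.Countable.measure_zero
        (hPm.countable_not_continuousAt.union hQm.countable_not_continuousAt) _
    have hBae : ∀ᵐ x ∂μ, x ∉ ({x | ¬ContinuousAt P x} ∪ {x | ¬ContinuousAt Q x}) := by
      exact (MeasureTheory.measure_eq_zero_iff_ae_notMem).1 hB
    filter_upwards [ae_restrict_mem measurableSet_Ico, hBae] with x hx hxB
    have hxI : x ∈ Set.Icc (0:ℝ) 1 := ⟨hx.1, hx.2.le⟩
    simp only [Set.mem_union, Set.mem_setOf_eq, not_or, not_not] at hxB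
    obtain ⟨hPc, hQc⟩ := hxB
    have hta : Filter.Tendsto (fun n => a n x) Filter.atTop (nhds x) := by
      apply tendsto_of_tendsto_of_tendsto_of_le_of_le
        (g := fun n : ℕ => x - (1/2:ℝ)^n) (h := fun _ : ℕ => x)
      · have h2 : Filter.Tendsto (fun n : ℕ => ((1:ℝ)/2)^n) Filter.atTop (nhds 0) := by
          apply tendsto_pow_atTop_nhds_zero_of_lt_one <;> norm_num
        simpa using Filter.Tendsto.const_sub x h2
      · exact tendsto_const_nhds
      · intro n
        have h3 := ha_gt n x
        have h4 : ((1:ℝ)/2)^n = 1/2^n := by rw [div_pow, one_pow]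
        show x - (1/2:ℝ)^n ≤ a n x
        rw [h4]
        linarith
      · intro n; exact ha_le n x
    have hla : Filter.Tendsto (fun n => ℓ (a n x)) Filter.atTop (nhds (ℓ x)) := by
      have h1 : ∀ n, ℓ (a n x) = P (a n x) - Q (a n x) := fun n => hLPQ _ (ha_mem n x hxI)
      have h2 : ℓ x = P x - Q x := hLPQ x hxI
      rw [h2]
      simp only [h1]
      exact (hPc.tendsto.comp hta).sub (hQc.tendsto.comp hta)
    exact hla.mul_const (h x)
  have hDCT := MeasureTheory.tendsto_integral_of_dominated_convergence (μ := μ)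
      (f := fun x => ℓ x * h x) (F := F) (fun x => Msup * |h x|) hFmeas hbint hbound hlim
  have hxmem : ∀ n, ∀ k : ℕ, k ≤ 2^n → ((k:ℝ)/2^n) ∈ Set.Icc (0:ℝ) 1 := by
    intro n k hk
    constructor
    · positivity
    · rw [div_le_one (h2pos n)]
      have : ((k:ℕ):ℝ) ≤ ((2^n : ℕ):ℝ) := by exact_mod_cast hk
      push_cast at this
      linarith
  have hSn : ∀ n, ∫ x, F n x ∂μ = ∑ i ∈ Finset.range (2^n),
      ℓ ((i:ℝ)/2^n) * (H ((((i+1):ℕ):ℝ)/2^n) - H ((i:ℝ)/2^n)) := by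
    intro n
    have hFint : IntegrableOn (F n) (Set.Icc (0:ℝ) 1) := by
      apply Integrable.mono' ((hh.abs.const_mul Msup))
        ((haF n).aestronglyMeasurable.mul hh.aestronglyMeasurable)
      filter_upwards [ae_restrict_mem measurableSet_Icc] with x hx
      show ‖ℓ (a n x) * h x‖ ≤ _
      rw [Real.norm_eq_abs, abs_mul]
      exact mul_le_mul_of_nonneg_right (hMsup _ (ha_mem n x hx)) (abs_nonneg _)
    have hpiece_sub : ∀ i : ℕ, i < 2^n →
        Set.Ico ((i:ℝ)/2^n) (((i:ℝ)+1)/2^n) ⊆ Set.Icc (0:ℝ) 1 := by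
      intro i hi y hy
      have h1 : (0:ℝ) ≤ (i:ℝ)/2^n := by positivity
      have h2 : ((i:ℝ)+1)/2^n ≤ 1 := by
        rw [div_le_one (h2pos n)]
        have h3 : ((i+1 : ℕ):ℝ) ≤ ((2^n : ℕ):ℝ) := by exact_mod_cast Nat.succ_le_of_lt hi
        push_cast at h3
        linarith
      exact ⟨le_trans h1 hy.1, le_trans hy.2.le h2⟩
    have hcover : Set.Ico (0:ℝ) 1 =
        ⋃ i ∈ Finset.range (2^n), Set.Ico ((i:ℝ)/2^n) (((i:ℝ)+1)/2^n) := by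
      ext x
      simp only [Set.mem_iUnion, Finset.mem_range, Set.mem_Ico, exists_prop]
      constructor
      · rintro ⟨hx0, hx1⟩
        have hfl0 : (0:ℤ) ≤ ⌊(2:ℝ)^n * x⌋ :=
          Int.floor_nonneg.mpr (mul_nonneg (le_of_lt (h2pos n)) hx0)
        refine ⟨⌊(2:ℝ)^n * x⌋.toNat, ?_, ?_, ?_⟩
        · have h5 : (2:ℝ)^n * x < (2:ℝ)^n * 1 := mul_lt_mul_of_pos_left hx1 (h2pos n)
          have h6 : (⌊(2:ℝ)^n * x⌋ : ℝ) ≤ (2:ℝ)^n * x := Int.floor_le _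
          have h7 : ((⌊(2:ℝ)^n * x⌋.toNat : ℕ) : ℝ) = (⌊(2:ℝ)^n * x⌋ : ℝ) := by
            exact_mod_cast congrArg (fun z : ℤ => (z : ℝ)) (Int.toNat_of_nonneg hfl0)
          have h8 : ((⌊(2:ℝ)^n * x⌋.toNat : ℕ) : ℝ) < ((2^n : ℕ) : ℝ) := by
            push_cast
            rw [h7] at *
            push_cast at h7
            linarith
          exact_mod_cast h8
        · have h7 : ((⌊(2:ℝ)^n * x⌋.toNat : ℕ) : ℝ) = (⌊(2:ℝ)^n * x⌋ : ℝ) := by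
            exact_mod_cast congrArg (fun z : ℤ => (z : ℝ)) (Int.toNat_of_nonneg hfl0)
          rw [div_le_iff₀ (h2pos n), h7]
          have := Int.floor_le ((2:ℝ)^n * x)
          linarith [mul_comm x ((2:ℝ)^n)]
        · have h7 : ((⌊(2:ℝ)^n * x⌋.toNat : ℕ) : ℝ) = (⌊(2:ℝ)^n * x⌋ : ℝ) := by
            exact_mod_cast congrArg (fun z : ℤ => (z : ℝ)) (Int.toNat_of_nonneg hfl0)
          rw [lt_div_iff₀ (h2pos n), h7]
          have := Int.lt_floor_add_one ((2:ℝ)^n * x)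
          linarith [mul_comm x ((2:ℝ)^n)]
      · rintro ⟨i, hi, hxl, hxr⟩
        have h1 : (0:ℝ) ≤ (i:ℝ)/2^n := by positivity
        have h2 : ((i:ℝ)+1)/2^n ≤ 1 := by
          rw [div_le_one (h2pos n)]
          have h3 : ((i+1 : ℕ):ℝ) ≤ ((2^n : ℕ):ℝ) := by exact_mod_cast Nat.succ_le_of_lt hi
          push_cast at h3
          linarith
        exact ⟨le_trans h1 hxl, lt_of_lt_of_le hxr h2⟩
    have hdisj : (↑(Finset.range (2^n)) : Set ℕ).Pairwise
        (Function.onFun Disjoint fun i : ℕ => Set.Ico ((i:ℝ)/2^n) (((i:ℝ)+1)/2^n)) := by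
      have key : ∀ i j : ℕ, i < j →
          Disjoint (Set.Ico ((i:ℝ)/2^n) (((i:ℝ)+1)/2^n))
            (Set.Ico ((j:ℝ)/2^n) (((j:ℝ)+1)/2^n)) := by
        intro i j hij'
        apply Set.Ico_disjoint_Ico.2
        have h1 : ((i:ℝ)+1)/2^n ≤ (j:ℝ)/2^n := by
          gcongr
          exact_mod_cast Nat.succ_le_of_lt hij'
        calc min (((i:ℝ)+1)/2^n) (((j:ℝ)+1)/2^n) ≤ ((i:ℝ)+1)/2^n := min_le_left _ _
          _ ≤ (j:ℝ)/2^n := h1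
          _ ≤ max ((i:ℝ)/2^n) ((j:ℝ)/2^n) := le_max_right _ _
      intro i _ j _ hij
      rcases lt_or_gt_of_ne hij with hlt | hlt
      · exact key i j hlt
      · exact (key j i hlt).symm
    have hpint : ∀ i ∈ Finset.range (2^n),
        IntegrableOn (F n) (Set.Ico ((i:ℝ)/2^n) (((i:ℝ)+1)/2^n)) := by
      intro i hi
      exact hFint.mono_set (hpiece_sub i (Finset.mem_range.1 hi))
    have h4 : (∫ x, F n x ∂μ) = ∫ x in Set.Ico (0:ℝ) 1, F n x := rfl
    rw [h4, hcover, MeasureTheory.integral_biUnion_finset _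
      (fun i _ => measurableSet_Ico) hdisj hpint]
    apply Finset.sum_congr rfl
    intro i hi
    have hi' : i < 2^n := Finset.mem_range.1 hi
    have hstep : ∫ x in Set.Ico ((i:ℝ)/2^n) (((i:ℝ)+1)/2^n), F n x
        = ∫ x in Set.Ico ((i:ℝ)/2^n) (((i:ℝ)+1)/2^n), ℓ ((i:ℝ)/2^n) * h x := by
      apply MeasureTheory.setIntegral_congr_fun measurableSet_Ico
      intro x hx
      show ℓ (a n x) * h x = _
      rw [hfloor_eq n i x hx]
    rw [hstep, MeasureTheory.integral_const_mul]
    congr 1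
    have hmem1 : ((i:ℝ)/2^n) ∈ Set.Icc (0:ℝ) 1 := hxmem n i (le_of_lt hi')
    have hmem2 : ((((i+1):ℕ):ℝ)/2^n) ∈ Set.Icc (0:ℝ) 1 := hxmem n (i+1) (Nat.succ_le_of_lt hi')
    have hcast : ((((i+1):ℕ):ℝ)) = (i:ℝ) + 1 := by push_cast; ring
    rw [hHsub _ hmem1 _ hmem2, hcast, intervalIntegral.integral_of_le (by gcongr; linarith),
      MeasureTheory.integral_Ioc_eq_integral_Ioo, MeasureTheory.integral_Ico_eq_integral_Ioo]
  have hSbound : ∀ n, |∑ i ∈ Finset.range (2^n),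
      ℓ ((i:ℝ)/2^n) * (H ((((i+1):ℕ):ℝ)/2^n) - H ((i:ℝ)/2^n))| ≤ V * M + |H 1| * Msup := by
    intro n
    set N := 2^n with hNdef
    have htel : ∀ k : ℕ, ∑ j ∈ Finset.range k,
        (H ((((j+1):ℕ):ℝ)/2^n) - H ((j:ℝ)/2^n)) = H ((k:ℝ)/2^n) - H 0 := by
      intro k
      have := Finset.sum_range_sub (fun j : ℕ => H ((j:ℝ)/2^n)) k
      simpa using this
    have habel := Finset.sum_range_by_parts (fun i : ℕ => ℓ ((i:ℝ)/2^n))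
      (fun i : ℕ => H ((((i+1):ℕ):ℝ)/2^n) - H ((i:ℝ)/2^n)) N
    simp only [smul_eq_mul] at habel
    rw [habel]
    have hxN : ((N:ℝ))/2^n = 1 := by
      rw [hNdef]; push_cast; exact div_self (ne_of_gt (h2pos n))
    have hGN : ∑ j ∈ Finset.range N, (H ((((j+1):ℕ):ℝ)/2^n) - H ((j:ℝ)/2^n)) = H 1 := by
      rw [htel N, hxN, hH0, sub_zero]
    rw [hGN]
    simp only [htel, hH0, sub_zero]
    have hTV : ∑ i ∈ Finset.range (N-1),
        |ℓ ((((i+1):ℕ):ℝ)/2^n) - ℓ ((i:ℝ)/2^n)| ≤ V := by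
      set u : ℕ → ℝ := fun i => ((min i N : ℕ):ℝ)/2^n with hudef
      have hum : Monotone u := by
        intro s t hst
        show ((min s N : ℕ):ℝ)/2^n ≤ ((min t N : ℕ):ℝ)/2^n
        have hc : ((min s N : ℕ):ℝ) ≤ ((min t N : ℕ):ℝ) := by
          exact_mod_cast min_le_min hst (le_refl N)
        gcongr
      have humem : ∀ i, u i ∈ Set.Icc (0:ℝ) 1 := by
        intro i
        refine ⟨by positivity, ?_⟩
        show ((min i N : ℕ):ℝ)/2^n ≤ 1
        rw [div_le_one (h2pos n)]
        calc ((min i N : ℕ):ℝ) ≤ ((N:ℕ):ℝ) := by exact_mod_cast min_le_right i N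
          _ = 2^n := by rw [hNdef]; push_cast; ring
      have hsum := eVariationOn.sum_le (f := ℓ) (n := N-1) hum humem
      have hcongr : ∀ i ∈ Finset.range (N-1), edist (ℓ (u (i+1))) (ℓ (u i)) =
          ENNReal.ofReal (|ℓ ((((i+1):ℕ):ℝ)/2^n) - ℓ ((i:ℝ)/2^n)|) := by
        intro i hi
        rw [Finset.mem_range] at hi
        have hiN : i ≤ N := le_trans (le_of_lt hi) (Nat.sub_le N 1)
        have hi1N : i + 1 ≤ N := Nat.succ_le_of_lt (lt_of_lt_of_le hi (Nat.sub_le N 1))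
        have h1 : u i = (i:ℝ)/2^n := by
          show ((min i N : ℕ):ℝ)/2^n = _
          rw [min_eq_left hiN]
        have h2 : u (i+1) = ((((i+1):ℕ)):ℝ)/2^n := by
          show ((min (i+1) N : ℕ):ℝ)/2^n = _
          rw [min_eq_left hi1N]
        rw [h1, h2, edist_dist, Real.dist_eq]
      rw [Finset.sum_congr rfl hcongr,
        ← ENNReal.ofReal_sum_of_nonneg (fun i _ => abs_nonneg _)] at hsum
      exact (ENNReal.ofReal_le_iff_le_toReal hℓ).1 hsum
    have hA : |ℓ ((((N-1):ℕ):ℝ)/2^n) * H 1| ≤ Msup * |H 1| := by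
      rw [abs_mul]
      exact mul_le_mul_of_nonneg_right (hMsup _ (hxmem n (N-1) (Nat.sub_le N 1))) (abs_nonneg _)
    have hB : |∑ i ∈ Finset.range (N-1),
        (ℓ ((((i+1):ℕ):ℝ)/2^n) - ℓ ((i:ℝ)/2^n)) * H ((((i+1):ℕ):ℝ)/2^n)| ≤ V * M := by
      calc |∑ i ∈ Finset.range (N-1),
          (ℓ ((((i+1):ℕ):ℝ)/2^n) - ℓ ((i:ℝ)/2^n)) * H ((((i+1):ℕ):ℝ)/2^n)|
          ≤ ∑ i ∈ Finset.range (N-1),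
            |(ℓ ((((i+1):ℕ):ℝ)/2^n) - ℓ ((i:ℝ)/2^n)) * H ((((i+1):ℕ):ℝ)/2^n)| :=
          Finset.abs_sum_le_sum_abs _ _
        _ ≤ ∑ i ∈ Finset.range (N-1),
            |ℓ ((((i+1):ℕ):ℝ)/2^n) - ℓ ((i:ℝ)/2^n)| * M := by
          apply Finset.sum_le_sum
          intro i hi
          rw [Finset.mem_range] at hi
          rw [abs_mul]
          apply mul_le_mul_of_nonneg_left _ (abs_nonneg _)
          exact hM _ (hxmem n (i+1) (Nat.succ_le_of_lt (lt_of_lt_of_le hi (Nat.sub_le N 1))))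
        _ = (∑ i ∈ Finset.range (N-1),
            |ℓ ((((i+1):ℕ):ℝ)/2^n) - ℓ ((i:ℝ)/2^n)|) * M := (Finset.sum_mul _ _ _).symm
        _ ≤ V * M := mul_le_mul_of_nonneg_right hTV hM0
    calc |ℓ ((((N-1):ℕ):ℝ)/2^n) * H 1 - ∑ i ∈ Finset.range (N-1),
          (ℓ ((((i+1):ℕ):ℝ)/2^n) - ℓ ((i:ℝ)/2^n)) * H ((((i+1):ℕ):ℝ)/2^n)|
        ≤ |ℓ ((((N-1):ℕ):ℝ)/2^n) * H 1| + |∑ i ∈ Finset.range (N-1),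
          (ℓ ((((i+1):ℕ):ℝ)/2^n) - ℓ ((i:ℝ)/2^n)) * H ((((i+1):ℕ):ℝ)/2^n)| := abs_sub _ _
      _ ≤ Msup * |H 1| + V * M := add_le_add hA hB
      _ = V * M + |H 1| * Msup := by ring
  have hIco : (∫ x in (0:ℝ)..1, ℓ x * h x) = ∫ x, ℓ x * h x ∂μ := by
    rw [hμdef, intervalIntegral.integral_of_le zero_le_one,
      MeasureTheory.integral_Ioc_eq_integral_Ioo, MeasureTheory.integral_Ico_eq_integral_Ioo]
  rw [hIco]
  refine le_of_tendsto hDCT.abs (Filter.Eventually.of_forall fun n => ?_)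
  rw [hSn n]
  exact hSbound n
/-- Keller's Lemma 11: for `ℓ` of bounded variation and `h ∈ L¹`,
`|∫ ℓ h| ≤ var(ℓ) sup_z |∫_0^z h| + |∫ h| ‖ℓ‖_∞ ≤ 2 ‖ℓ‖_BV sup_z |∫_0^z h|`. -/
theorem keller_lemma11 (ℓ h : ℝ → ℝ)
    (hℓ : BoundedVariationOn ℓ (Set.Icc 0 1))
    (hh : IntegrableOn h (Set.Icc 0 1)) :
    |∫ x in (0:ℝ)..1, ℓ x * h x| ≤
      (eVariationOn ℓ (Set.Icc 0 1)).toReal *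
        (⨆ z : Set.Icc (0:ℝ) 1, |∫ x in (0:ℝ)..(z : ℝ), h x|) +
      |∫ x in (0:ℝ)..1, h x| * (⨆ x : Set.Icc (0:ℝ) 1, |ℓ (x : ℝ)|) ∧
    (eVariationOn ℓ (Set.Icc 0 1)).toReal *
        (⨆ z : Set.Icc (0:ℝ) 1, |∫ x in (0:ℝ)..(z : ℝ), h x|) +
      |∫ x in (0:ℝ)..1, h x| * (⨆ x : Set.Icc (0:ℝ) 1, |ℓ (x : ℝ)|) ≤
      2 * bvBV ℓ * (⨆ z : Set.Icc (0:ℝ) 1, |∫ x in (0:ℝ)..(z : ℝ), h x|) := by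
  classical
  set V := (eVariationOn ℓ (Set.Icc (0:ℝ) 1)).toReal with hVdef
  set M := (⨆ z : Set.Icc (0:ℝ) 1, |∫ x in (0:ℝ)..(z : ℝ), h x|) with hMdef
  set Msup := (⨆ x : Set.Icc (0:ℝ) 1, |ℓ (x : ℝ)|) with hMsupdef
  have h01 : (0:ℝ) ∈ Set.Icc (0:ℝ) 1 := ⟨le_refl 0, zero_le_one⟩
  have h11 : (1:ℝ) ∈ Set.Icc (0:ℝ) 1 := ⟨zero_le_one, le_refl 1⟩
  have hVar : ∀ x ∈ Set.Icc (0:ℝ) 1, ∀ y ∈ Set.Icc (0:ℝ) 1, |ℓ x - ℓ y| ≤ V := by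
    intro x hx y hy
    have h1 : edist (ℓ x) (ℓ y) ≤ eVariationOn ℓ (Set.Icc (0:ℝ) 1) :=
      eVariationOn.edist_le ℓ hx hy
    rw [edist_dist] at h1
    have h2 : dist (ℓ x) (ℓ y) ≤ V := (ENNReal.ofReal_le_iff_le_toReal hℓ).1 h1
    rwa [Real.dist_eq] at h2
  have hC : ∀ x ∈ Set.Icc (0:ℝ) 1, |ℓ x| ≤ |ℓ 0| + V := by
    intro x hx
    have := hVar x hx 0 h01
    have h2 := abs_sub_abs_le_abs_sub (ℓ x) (ℓ 0)
    linarith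
  have hMsupBdd : BddAbove (Set.range fun x : Set.Icc (0:ℝ) 1 => |ℓ (x:ℝ)|) := by
    refine ⟨|ℓ 0| + V, ?_⟩
    rintro y ⟨x, rfl⟩
    exact hC x x.2
  have hMsup_le : ∀ x ∈ Set.Icc (0:ℝ) 1, |ℓ x| ≤ Msup := by
    intro x hx
    exact le_ciSup hMsupBdd (⟨x, hx⟩ : Set.Icc (0:ℝ) 1)
  have hMsup0 : 0 ≤ Msup := le_trans (abs_nonneg _) (hMsup_le 0 h01)
  -- bounds for the primitive
  have hint : ∀ a ∈ Set.Icc (0:ℝ) 1, ∀ b ∈ Set.Icc (0:ℝ) 1,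
      IntervalIntegrable h volume a b := by
    intro a ha b hb
    exact (hh.mono_set (Set.uIcc_subset_Icc ha hb)).intervalIntegrable
  have hHb : ∀ z ∈ Set.Icc (0:ℝ) 1, |∫ x in (0:ℝ)..z, h x| ≤ ∫ x in (0:ℝ)..1, |h x| := by
    intro z hz
    have h1 : |∫ x in (0:ℝ)..z, h x| ≤ ∫ x in (0:ℝ)..z, |h x| :=
      intervalIntegral.abs_integral_le_integral_abs hz.1
    have h2 : (∫ x in (0:ℝ)..z, |h x|) + ∫ x in z..1, |h x| = ∫ x in (0:ℝ)..1, |h x| :=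
      intervalIntegral.integral_add_adjacent_intervals
        (hint 0 h01 z hz).abs (hint z hz 1 h11).abs
    have h3 : 0 ≤ ∫ x in z..1, |h x| :=
      intervalIntegral.integral_nonneg hz.2 (fun x _ => abs_nonneg _)
    linarith
  have hMBdd : BddAbove (Set.range fun z : Set.Icc (0:ℝ) 1 => |∫ x in (0:ℝ)..(z:ℝ), h x|) := by
    refine ⟨∫ x in (0:ℝ)..1, |h x|, ?_⟩
    rintro y ⟨z, rfl⟩
    exact hHb z z.2
  have hM_le : ∀ z ∈ Set.Icc (0:ℝ) 1, |∫ x in (0:ℝ)..z, h x| ≤ M := by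
    intro z hz
    exact le_ciSup hMBdd (⟨z, hz⟩ : Set.Icc (0:ℝ) 1)
  have hM0 : 0 ≤ M := le_trans (abs_nonneg _) (hM_le 0 h01)
  have hI1 : |∫ x in (0:ℝ)..1, h x| ≤ M := hM_le 1 h11
  constructor
  · exact keller_aux ℓ h hℓ hh hM_le hMsup_le hM0
  · -- second inequality
    obtain ⟨P, Q, hPm, hQm, hLPQ⟩ := keller_exists_monotone ℓ hℓ
    have hmeas : AEStronglyMeasurable ℓ (volume.restrict (Set.Icc (0:ℝ) 1)) := by
      apply ((hPm.measurable.sub hQm.measurable).aestronglyMeasurable).congr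
      filter_upwards [ae_restrict_mem measurableSet_Icc] with x hx
      exact (hLPQ x hx).symm
    have hlint : IntegrableOn ℓ (Set.Icc (0:ℝ) 1) := by
      apply Integrable.mono' (g := fun _ => |ℓ 0| + V) ?_ hmeas ?_
      · exact integrableOn_const measure_Icc_lt_top.ne
      · filter_upwards [ae_restrict_mem measurableSet_Icc] with x hx
        rw [Real.norm_eq_abs]
        exact hC x hx
    have habs_int : IntervalIntegrable (fun x => |ℓ x|) volume 0 1 := by
      apply MeasureTheory.IntegrableOn.intervalIntegrable
      rw [Set.uIcc_of_le zero_le_one]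
      exact hlint.abs
    have hl1_ge : ∀ x ∈ Set.Icc (0:ℝ) 1, |ℓ x| - V ≤ l1 ℓ := by
      intro x hx
      have hmono : ∀ y ∈ Set.Icc (0:ℝ) 1, |ℓ x| - V ≤ |ℓ y| := by
        intro y hy
        have h1 := hVar x hx y hy
        have h2 := abs_sub_abs_le_abs_sub (ℓ x) (ℓ y)
        linarith
      have h3 := intervalIntegral.integral_mono_on zero_le_one
        intervalIntegrable_const habs_int hmono
      have h4 : (∫ _ in (0:ℝ)..1, (|ℓ x| - V)) = |ℓ x| - V := by simp
      rw [h4] at h3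
      exact h3
    have hMsup_bv : Msup ≤ bvBV ℓ := by
      apply ciSup_le
      intro x
      have h1 := hl1_ge x x.2
      have h2 : bvBV ℓ = l1 ℓ + V := by rw [bvBV, hVdef]
      linarith
    have hl1_0 : 0 ≤ l1 ℓ := intervalIntegral.integral_nonneg zero_le_one fun x _ => abs_nonneg _
    have hbv : bvBV ℓ = l1 ℓ + V := by rw [bvBV, hVdef]
    have hIa : 0 ≤ |∫ x in (0:ℝ)..1, h x| := abs_nonneg _
    have hVnn : (0:ℝ) ≤ V := ENNReal.toReal_nonneg
    have hmul1 : V * M ≤ (l1 ℓ + V) * M :=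
      mul_le_mul_of_nonneg_right (by linarith) hM0
    have hmul2 : |∫ x in (0:ℝ)..1, h x| * Msup ≤ M * (l1 ℓ + V) :=
      mul_le_mul hI1 (hbv ▸ hMsup_bv) hMsup0 hM0
    rw [hbv]
    nlinarith [hmul1, hmul2]
end
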